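/- For every commutative ring R, every family w : ℤ → R, every integer ℓ ≥ 0 and every n ∈ ℤ, the identity A_{ℓ,0}(n) = A_{ℓ-1,-1}(n+1) + A_{ℓ-1,-1}(n) holds. (This is the coefficient form of the relation G_{n+1}(λ) = (A_{n+1}(λ) + A_n(λ) + 1)/λ between the series G_n(λ) = Σ_{ℓ≥0} A_{ℓ-1,0}(n−1) λ^{-ℓ-1} and A_n(λ) = Σ_{ℓ≥0} A_{ℓ-1,-1}(n) λ^{-ℓ-1}.) -/

import Mathlib

/-- Coefficients of the powers `P^ℓ = Σ_k (aAux w ℓ k n) Λ^k` of the difference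
operator `P = Λ + w_n Λ⁻¹` (natural-number power index `ℓ ≥ 0`). -/
def aAux {R : Type*} [CommRing R] (w : ℤ → R) : ℕ → ℤ → ℤ → R
  | 0, k, _ => if k = 0 then 1 else 0
  | l + 1, k, n => aAux w l (k - 1) n + w (n + k + 1) * aAux w l (k + 1) n

/-- `aCoef w ℓ k n` is `A_{ℓ,k}(n)`, the coefficient of `Λ^k` in `P^{ℓ+1}`,
for an integer `ℓ` (meaningful for `ℓ ≥ -1`). -/
def aCoef {R : Type*} [CommRing R] (w : ℤ → R) (l k n : ℤ) : R := aAux w (l + 1).toNat k n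

lemma aAux_succ {R : Type*} [CommRing R] (w : ℤ → R) (m : ℕ) (k n : ℤ) :
    aAux w (m + 1) k n = aAux w m (k - 1) n + w (n + k + 1) * aAux w m (k + 1) n := rfl

/-- The alternative recursion coming from `P^{m+1} = P ∘ P^m`. -/
lemma aAux_rec2 {R : Type*} [CommRing R] (w : ℤ → R) (m : ℕ) (k n : ℤ) :
    aAux w (m + 1) k n = aAux w m (k - 1) (n + 1) + w n * aAux w m (k + 1) (n - 1) := by
  induction m generalizing k n with
  | zero =>
    simp only [aAux]
    by_cases h1 : k - 1 = 0
    · have h2 : ¬ (k + 1 = 0) := by omega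
      simp [h1, h2]
    · by_cases h2 : k + 1 = 0
      · obtain rfl : k = -1 := by omega
        norm_num
      · simp [h1, h2]
  | succ m ih =>
    rw [aAux_succ w (m + 1) k n, ih, ih, aAux_succ, aAux_succ]
    ring_nf

/-- Adjointness relation: `A_{m,-k}(n+k) = (∏_{j=1}^k w_{n+j}) A_{m,k}(n)`. -/
lemma aAux_adj {R : Type*} [CommRing R] (w : ℤ → R) (m : ℕ) : ∀ (k : ℕ) (n : ℤ),
    aAux w m (-(k : ℤ)) (n + k) = (∏ j ∈ Finset.range k, w (n + j + 1)) * aAux w m k n := by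
  induction m with
  | zero =>
    intro k n
    rcases Nat.eq_zero_or_pos k with rfl | hk
    · simp [aAux]
    · have h1 : ¬ (-(k : ℤ) = 0) := by omega
      have h2 : ¬ ((k : ℤ) = 0) := by omega
      simp [aAux, h1, h2, hk.ne']
  | succ m ih =>
    intro k n
    rcases Nat.eq_zero_or_pos k with rfl | hk
    · simp
    · obtain ⟨k', rfl⟩ : ∃ k', k = k' + 1 := ⟨k - 1, by omega⟩
      rw [aAux_rec2]
      have e1 : (-((k' + 1 : ℕ) : ℤ)) - 1 = -((k' + 2 : ℕ) : ℤ) := by push_cast; ring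
      have e2 : n + ((k' + 1 : ℕ) : ℤ) + 1 = n + ((k' + 2 : ℕ) : ℤ) := by push_cast; ring
      have e3 : (-((k' + 1 : ℕ) : ℤ)) + 1 = -((k' : ℕ) : ℤ) := by push_cast; ring
      have e4 : n + ((k' + 1 : ℕ) : ℤ) - 1 = n + ((k' : ℕ) : ℤ) := by push_cast; ring
      rw [e1, e2, e3, e4, ih (k' + 2) n, ih k' n, aAux_succ]
      have e5 : ((k' + 1 : ℕ) : ℤ) - 1 = ((k' : ℕ) : ℤ) := by push_cast; ring
      have e6 : ((k' + 1 : ℕ) : ℤ) + 1 = ((k' + 2 : ℕ) : ℤ) := by push_cast; ring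
      rw [e5, e6, Finset.prod_range_succ (n := k' + 1), Finset.prod_range_succ (n := k')]
      push_cast
      generalize (∏ j ∈ Finset.range k', w (n + (j : ℤ) + 1)) = p
      ring

theorem G_eq_A (R : Type*) [CommRing R] (w : ℤ → R) (l : ℤ) (hl : 0 ≤ l) (n : ℤ) :
    aCoef w l 0 n = aCoef w (l - 1) (-1) (n + 1) + aCoef w (l - 1) (-1) n := by
  lift l to ℕ using hl with m
  have h1 : ((m : ℤ) + 1).toNat = m + 1 := by omega
  have h2 : ((m : ℤ) - 1 + 1).toNat = m := by omega
  unfold aCoef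
  rw [h1, h2, aAux_succ]
  have := aAux_adj w m 1 n
  simp only [Finset.prod_range_one, Nat.cast_one] at this
  norm_num at this ⊢
  rw [this]
  ring
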